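/- Let x be a real number with x > 1, for each positive integer n let r(n) be the unique positive real solution of t(e^t + x) = 2 n x log x, and set λ_0(n) = x e^{−r(n)}, a_0(n) = (1 + λ_0(n))²/(4 n λ_0(n) log x), χ(n) = log n/(n λ_0(n)). Define the second steepest-descent coefficient c_{20}(n) = Q_2(a_0(n), λ_0(n)) χ(n)²/(216 (1 + 2 a_0(n))⁶), where Q_2(a, ξ) = P_{21}(ξ) − 6 a P_{22}(ξ) + 3 a² P_{23}(ξ) − 48 a³ P_{24}(ξ) with P_{21}(ξ) = (1 + ξ + ξ²)², P_{22}(ξ) = 13 + 5ξ − 10ξ² + 5ξ³ + 13ξ⁴, P_{23}(ξ) = 67 − 328ξ + 278ξ² − 328ξ³ + 67ξ⁴, P_{24}(ξ) = 1 − 26ξ + 66ξ² − 26ξ³ + ξ⁴. Then c_{20}(n) → (1/54) (log x)² as n → ∞. -/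

import Mathlib

open Filter

/-- `P₂₁(ξ) = (1 + ξ + ξ²)²`. -/
def P21 (ξ : ℝ) : ℝ := (1 + ξ + ξ ^ 2) ^ 2

/-- `P₂₂(ξ) = 13 + 5ξ − 10ξ² + 5ξ³ + 13ξ⁴`. -/
def P22 (ξ : ℝ) : ℝ := 13 + 5 * ξ - 10 * ξ ^ 2 + 5 * ξ ^ 3 + 13 * ξ ^ 4

/-- `P₂₃(ξ) = 67 − 328ξ + 278ξ² − 328ξ³ + 67ξ⁴`. -/
def P23 (ξ : ℝ) : ℝ := 67 - 328 * ξ + 278 * ξ ^ 2 - 328 * ξ ^ 3 + 67 * ξ ^ 4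

/-- `P₂₄(ξ) = 1 − 26ξ + 66ξ² − 26ξ³ + ξ⁴`. -/
def P24 (ξ : ℝ) : ℝ := 1 - 26 * ξ + 66 * ξ ^ 2 - 26 * ξ ^ 3 + ξ ^ 4

/-- `Q₂(a, ξ) = P₂₁(ξ) − 6 a P₂₂(ξ) + 3 a² P₂₃(ξ) − 48 a³ P₂₄(ξ)`. -/
def Q2 (a ξ : ℝ) : ℝ := P21 ξ - 6 * a * P22 ξ + 3 * a ^ 2 * P23 ξ - 48 * a ^ 3 * P24 ξ

set_option maxHeartbeats 1000000 in
/-- For a real `x > 1`, with `r(n)` the unique positive solution of `t(e^t + x) = 2 n x log x`,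
`λ₀(n) = x e^{−r(n)}`, `a₀(n) = (1 + λ₀(n))²/(4 n λ₀(n) log x)`, `χ(n) = log n/(n λ₀(n))`, the
second steepest-descent coefficient `c₂₀(n) = Q₂(a₀(n), λ₀(n)) χ(n)²/(216 (1 + 2 a₀(n))⁶)`
satisfies `c₂₀(n) → (1/54)(log x)²` as `n → ∞`. -/
theorem c20_limit (x : ℝ) (hx : 1 < x) (r : ℕ → ℝ)
    (hr : ∀ n : ℕ, 1 ≤ n → 0 < r n ∧ r n * (Real.exp (r n) + x) = 2 * n * x * Real.log x)
    (lam0 a0 chi c20 : ℕ → ℝ)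
    (hlam : ∀ n : ℕ, lam0 n = x * Real.exp (-(r n)))
    (ha : ∀ n : ℕ, a0 n = (1 + lam0 n) ^ 2 / (4 * n * lam0 n * Real.log x))
    (hchi : ∀ n : ℕ, chi n = Real.log n / (n * lam0 n))
    (hc : ∀ n : ℕ, c20 n = Q2 (a0 n) (lam0 n) * (chi n) ^ 2 / (216 * (1 + 2 * a0 n) ^ 6)) :
    Tendsto c20 atTop (nhds ((1 / 54) * (Real.log x) ^ 2)) := by
  have hx0 : (0 : ℝ) < x := lt_trans one_pos hx
  set L := Real.log x with hLdef
  have hL : 0 < L := Real.log_pos hx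
  -- r tends to infinity
  have hrtop : Tendsto r atTop atTop := by
    rw [tendsto_atTop]
    intro b
    set b' := max b 1 with hb'def
    have hb'pos : (0 : ℝ) < b' := lt_of_lt_of_le one_pos (le_max_right _ _)
    obtain ⟨N, hN⟩ := exists_nat_ge (b' * (Real.exp b' + x) / (2 * x * L))
    filter_upwards [eventually_ge_atTop (max N 1)] with n hn
    have hn1 : 1 ≤ n := le_trans (le_max_right _ _) hn
    have hnN : (N : ℝ) ≤ n := Nat.cast_le.mpr (le_trans (le_max_left _ _) hn)
    obtain ⟨hrpos, heq⟩ := hr n hn1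
    have hub : b' * (Real.exp b' + x) ≤ 2 * n * x * L := by
      have h2 : (0 : ℝ) < 2 * x * L := by positivity
      have := (div_le_iff₀ h2).mp (le_trans hN hnN)
      nlinarith
    have : b' ≤ r n := by
      by_contra hcon
      push_neg at hcon
      have h1 : Real.exp (r n) + x ≤ Real.exp b' + x :=
        add_le_add_left (Real.exp_le_exp.mpr hcon.le) x
      have h2 : (0 : ℝ) < Real.exp b' + x := by positivity
      have : r n * (Real.exp (r n) + x) < b' * (Real.exp b' + x) :=
        lt_of_le_of_lt (mul_le_mul_of_nonneg_left h1 hrpos.le)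
          (mul_lt_mul_of_pos_right hcon h2)
      linarith [heq ▸ this]
    exact le_trans (le_max_left _ _) this
  -- lam0 tends to 0
  have hlamlim : Tendsto lam0 atTop (nhds 0) := by
    have h1 : Tendsto (fun n => Real.exp (-(r n))) atTop (nhds 0) :=
      Real.tendsto_exp_atBot.comp (tendsto_neg_atBot_iff.mpr hrtop)
    have h2 : Tendsto (fun n => x * Real.exp (-(r n))) atTop (nhds (x * 0)) :=
      h1.const_mul x
    rw [mul_zero] at h2
    exact h2.congr (fun n => (hlam n).symm)
  have hlampos : ∀ n, 0 < lam0 n := by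
    intro n; rw [hlam n]; positivity
  -- key algebraic identities, eventually
  have hkey : ∀ᶠ n in atTop, a0 n = (1 + lam0 n) / (2 * r n) ∧
      chi n = 2 * L * ((r n + Real.log (r n) + Real.log (1 + lam0 n)
        - Real.log (2 * x * L)) / (r n)) / (1 + lam0 n) := by
    filter_upwards [eventually_ge_atTop 1, hrtop.eventually_ge_atTop 1] with n hn1 hrn1
    obtain ⟨hrpos, heq⟩ := hr n hn1
    have hnpos : (0 : ℝ) < n := by exact_mod_cast hn1
    have hlpos := hlampos n
    have hl1 : (0 : ℝ) < 1 + lam0 n := by linarith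
    have hexp : Real.exp (r n) > 0 := Real.exp_pos _
    -- 2 n L lam0 = r (1 + lam0)
    have hmain : 2 * n * L * lam0 n = r n * (1 + lam0 n) := by
      rw [hlam n]
      have : Real.exp (-(r n)) = (Real.exp (r n))⁻¹ := by
        rw [Real.exp_neg]
      rw [this]
      field_simp
      nlinarith [heq]
    constructor
    · rw [ha n]
      rw [show 4 * (n : ℝ) * lam0 n * L = 2 * (2 * n * L * lam0 n) by ring, hmain]
      field_simp
    · rw [hchi n]
      -- n * lam0 n = r n * (1 + lam0 n) / (2 * L)
      have hnl : (n : ℝ) * lam0 n = r n * (1 + lam0 n) / (2 * L) := by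
        field_simp
        linarith [hmain]
      -- log n
      have hncast : (n : ℝ) = r n * (Real.exp (r n) + x) / (2 * x * L) := by
        field_simp
        linarith [heq]
      have hex : Real.exp (r n) + x = Real.exp (r n) * (1 + lam0 n) := by
        rw [hlam n, Real.exp_neg]
        field_simp
      have hlogn : Real.log n = r n + Real.log (r n) + Real.log (1 + lam0 n)
          - Real.log (2 * x * L) := by
        rw [hncast, hex]
        rw [Real.log_div (by positivity) (by positivity),
          Real.log_mul hrpos.ne' (by positivity),
          Real.log_mul hexp.ne' hl1.ne', Real.log_exp]
        ring
      rw [hlogn, hnl]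
      field_simp
  -- a0 tends to 0
  have ha0lim : Tendsto a0 atTop (nhds 0) := by
    have h1 : Tendsto (fun n => (1 + lam0 n) / (2 * r n)) atTop (nhds 0) := by
      apply Filter.Tendsto.div_atTop (a := 1 + 0)
      · exact tendsto_const_nhds.add hlamlim
      · exact (tendsto_const_nhds.pos_mul_atTop two_pos hrtop)
    exact h1.congr' (by filter_upwards [hkey] with n h; exact h.1.symm)
  -- chi tends to 2L
  have hchilim : Tendsto chi atTop (nhds (2 * L)) := by
    have hinner : Tendsto (fun n => (r n + Real.log (r n) + Real.log (1 + lam0 n)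
        - Real.log (2 * x * L)) / (r n)) atTop (nhds 1) := by
      have hev : ∀ᶠ n in atTop, (r n + Real.log (r n) + Real.log (1 + lam0 n)
          - Real.log (2 * x * L)) / (r n) = 1 + Real.log (r n) / r n
          + Real.log (1 + lam0 n) / r n - Real.log (2 * x * L) / r n := by
        filter_upwards [hrtop.eventually_ge_atTop 1] with n hrn1
        have : r n ≠ 0 := by linarith
        field_simp
      have hg : Tendsto (fun n => 1 + Real.log (r n) / r n
          + Real.log (1 + lam0 n) / r n - Real.log (2 * x * L) / r n) atTop
          (nhds (1 + 0 + 0 - 0)) := by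
        refine ((tendsto_const_nhds.add ?_).add ?_).sub ?_
        · exact Real.isLittleO_log_id_atTop.tendsto_div_nhds_zero.comp hrtop
        · apply Filter.Tendsto.div_atTop (a := Real.log (1 + 0)) _ hrtop
          have h0 : Tendsto (fun n => 1 + lam0 n) atTop (nhds (1 + 0)) :=
            tendsto_const_nhds.add hlamlim
          exact Filter.Tendsto.comp (Real.continuousAt_log (by norm_num : (1:ℝ) + 0 ≠ 0)) h0
        · exact tendsto_const_nhds.div_atTop hrtop
      rw [show (1 : ℝ) + 0 + 0 - 0 = 1 by norm_num] at hg
      exact hg.congr' (Filter.EventuallyEq.symm hev)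
    have h2 : Tendsto (fun n => 2 * L * ((r n + Real.log (r n) + Real.log (1 + lam0 n)
        - Real.log (2 * x * L)) / (r n)) / (1 + lam0 n)) atTop
        (nhds (2 * L * 1 / (1 + 0))) := by
      exact ((tendsto_const_nhds.mul hinner).div (tendsto_const_nhds.add hlamlim)
        (by norm_num))
    rw [show 2 * L * 1 / (1 + 0) = 2 * L by ring] at h2
    exact h2.congr' (by filter_upwards [hkey] with n h; exact h.2.symm)
  -- Q2 tendsto
  have hP21 : Tendsto (fun n => P21 (lam0 n)) atTop (nhds (P21 0)) :=
    (by unfold P21; fun_prop : Continuous P21).continuousAt.tendsto.comp hlamlim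
  have hP22 : Tendsto (fun n => P22 (lam0 n)) atTop (nhds (P22 0)) :=
    (by unfold P22; fun_prop : Continuous P22).continuousAt.tendsto.comp hlamlim
  have hP23 : Tendsto (fun n => P23 (lam0 n)) atTop (nhds (P23 0)) :=
    (by unfold P23; fun_prop : Continuous P23).continuousAt.tendsto.comp hlamlim
  have hP24 : Tendsto (fun n => P24 (lam0 n)) atTop (nhds (P24 0)) :=
    (by unfold P24; fun_prop : Continuous P24).continuousAt.tendsto.comp hlamlim
  have hQ : Tendsto (fun n => Q2 (a0 n) (lam0 n)) atTop
      (nhds (P21 0 - 6 * 0 * P22 0 + 3 * 0 ^ 2 * P23 0 - 48 * 0 ^ 3 * P24 0)) := by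
    simp only [Q2]
    exact ((hP21.sub ((ha0lim.const_mul 6).mul hP22)).add
      (((ha0lim.pow 2).const_mul 3).mul hP23)).sub (((ha0lim.pow 3).const_mul 48).mul hP24)
  have hQval : P21 0 - 6 * 0 * P22 0 + 3 * (0:ℝ) ^ 2 * P23 0 - 48 * 0 ^ 3 * P24 0 = 1 := by
    norm_num [P21, P22, P23, P24]
  rw [hQval] at hQ
  -- combine
  have hfinal : Tendsto (fun n => Q2 (a0 n) (lam0 n) * (chi n) ^ 2
      / (216 * (1 + 2 * a0 n) ^ 6)) atTop
      (nhds (1 * (2 * L) ^ 2 / (216 * (1 + 2 * 0) ^ 6))) := by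
    refine (hQ.mul (hchilim.pow 2)).div
      (tendsto_const_nhds.mul ((tendsto_const_nhds.add (ha0lim.const_mul 2)).pow 6))
      (by norm_num)
  have : (1 : ℝ) * (2 * L) ^ 2 / (216 * (1 + 2 * 0) ^ 6) = (1 / 54) * L ^ 2 := by
    ring
  rw [this] at hfinal
  exact hfinal.congr (fun n => (hc n).symm)
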